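/- For every set P of n ≥ 3 points in general position in the plane, the independence number α(D(P)) of the disjointness graph D(P) equals n−1 or n. -/

import Mathlib

noncomputable section

/-- Points of the plane. -/
abbrev Pl := ℝ × ℝ

/-- `P` is in general position: no three (distinct) points of `P` are collinear. -/
def GenPos (P : Set Pl) : Prop :=
  ∀ a ∈ P, ∀ b ∈ P, ∀ c ∈ P, a ≠ b → a ≠ c → b ≠ c →
    ¬ Collinear ℝ ({a, b, c} : Set Pl)

/-- The set of all closed straight-line segments with (distinct) endpoints in `P`. -/
def Segs (P : Set Pl) : Set (Set Pl) :=
  {s | ∃ a ∈ P, ∃ b ∈ P, a ≠ b ∧ s = segment ℝ a b}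

/-- The edge disjointness graph of `P`: vertices are the segments of `P`,
two of them adjacent iff they are disjoint. -/
def DisjGraph (P : Set Pl) : SimpleGraph ↥(Segs P) where
  Adj s t := Disjoint (s : Set Pl) (t : Set Pl)
  symm := ⟨fun _ _ h => h.symm⟩
  loopless := by
    constructor
    rintro ⟨s, a, ha, b, hb, hab, rfl⟩ h
    exact (Set.not_disjoint_iff.2
      ⟨a, left_mem_segment ℝ a b, left_mem_segment ℝ a b⟩) h

/-- An independent set of vertices: pairwise non-adjacent. -/
def IsIndepSet {V : Type*} (G : SimpleGraph V) (s : Set V) : Prop :=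
  s.Pairwise fun a b => ¬ G.Adj a b

/-- Twice the signed area of the triangle `a b c`; its sign is the orientation. -/
def det3 (a b c : Pl) : ℝ :=
  (b.1 - a.1) * (c.2 - a.2) - (b.2 - a.2) * (c.1 - a.1)

/-- `p 0, …, p (n-1)` are in convex position, appearing in this
(counterclockwise) cyclic order on their convex hull. -/
def ConvexCyclic {n : ℕ} (p : Fin n → Pl) : Prop :=
  ∀ i j k : Fin n, i < j → j < k → 0 < det3 (p i) (p j) (p k)

/-- `P` is in convex position: every point of `P` is a vertex of the convex hull. -/
def ConvexPos (P : Set Pl) : Prop :=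
  ∀ x ∈ P, x ∉ convexHull ℝ (P \ {x})

/-- `P` and `Q` have the same order type. -/
def SameOrderType (P Q : Set Pl) : Prop :=
  ∃ γ : Pl → Pl, Set.BijOn γ P Q ∧
    ∀ a ∈ P, ∀ b ∈ P, ∀ c ∈ P,
      Real.sign (det3 a b c) = Real.sign (det3 (γ a) (γ b) (γ c))

/-- A thrackle of `P`: a set of segments of `P`, any two of which intersect. -/
def IsThrackle (P : Set Pl) (T : Set (Set Pl)) : Prop :=
  T ⊆ Segs P ∧ ∀ s ∈ T, ∀ t ∈ T, s ≠ t → ¬ Disjoint s t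

end


/-! ### Auxiliary lemmas -/

open scoped Classical

noncomputable section

lemma det3_swap23 (a b c : Pl) : det3 a c b = - det3 a b c := by
  simp only [det3]; ring

lemma det3_on_seg (u v a : Pl) (t : ℝ) :
    det3 u v ((1 - t) • u + t • a) = t * det3 u v a := by
  simp only [det3, Prod.smul_fst, Prod.smul_snd, Prod.fst_add, Prod.snd_add, smul_eq_mul]
  ring

lemma seg_mem_param {u a p : Pl} (h : p ∈ segment ℝ u a) :
    ∃ t : ℝ, 0 ≤ t ∧ t ≤ 1 ∧ p = (1 - t) • u + t • a := by
  rw [segment_eq_image] at h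
  obtain ⟨t, ht, rfl⟩ := h
  exact ⟨t, ht.1, ht.2, rfl⟩


lemma det3_on_seg' (u v x : Pl) (s : ℝ) :
    det3 u v ((1 - s) • v + s • x) = s * det3 u v x := by
  simp only [det3, Prod.smul_fst, Prod.smul_snd, Prod.fst_add, Prod.snd_add, smul_eq_mul]
  ring

/-- Key geometric lemma: if `a` and `x` are on strictly opposite sides of the
line `uv`, then the segments `ua` and `vx` are disjoint. -/
lemma disjoint_of_opposite_sides {u v a x : Pl} (huv : u ≠ v)
    (h : det3 u v a * det3 u v x < 0) :
    Disjoint (segment ℝ u a) (segment ℝ v x) := by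
  rw [Set.disjoint_left]
  rintro p hp1 hp2
  obtain ⟨t, ht0, ht1, rfl⟩ := seg_mem_param hp1
  obtain ⟨s, hs0, hs1, hps⟩ := seg_mem_param hp2
  have hA : det3 u v ((1 - t) • u + t • a) = t * det3 u v a := det3_on_seg u v a t
  have hX : det3 u v ((1 - t) • u + t • a) = s * det3 u v x := by
    rw [hps]; exact det3_on_seg' u v x s
  have heq : t * det3 u v a = s * det3 u v x := by rw [← hA, hX]
  have hAne : det3 u v a ≠ 0 := fun h0 => by simp [h0] at h
  have hXne : det3 u v x ≠ 0 := fun h0 => by simp [h0] at h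
  have ht : t = 0 := by
    by_contra htne
    have htpos : 0 < t := lt_of_le_of_ne ht0 (Ne.symm htne)
    have hspos : 0 < s := by
      rcases lt_or_eq_of_le hs0 with h' | h'
      · exact h'
      · exfalso; rw [← h'] at heq; simp at heq
        rcases heq with h1 | h1
        · exact htne h1
        · exact hAne h1
    have h2 : (t * det3 u v a) * (s * det3 u v x) = (t * det3 u v a)^2 := by rw [← heq]; ring
    have h3 : (t * det3 u v a) * (s * det3 u v x) = (t*s) * (det3 u v a * det3 u v x) := by ring
    have h4 : (t*s) * (det3 u v a * det3 u v x) < 0 := mul_neg_of_pos_of_neg (mul_pos htpos hspos) h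
    nlinarith [sq_nonneg (t * det3 u v a)]
  have hs : s = 0 := by
    rw [ht, zero_mul] at heq
    rcases (mul_eq_zero.mp heq.symm) with h1 | h1
    · exact h1
    · exact absurd h1 hXne
  apply huv
  have : (1 - t) • u + t • a = (1 - s) • v + s • x := hps
  rw [ht, hs] at this
  simpa using this

lemma comb_eq_self {a b : Pl} (hab : a ≠ b) {k : ℝ} (h : (1-k) • a + k • b = a) : k = 0 := by
  have h1 : (1-k) * a.1 + k * b.1 = a.1 := congrArg Prod.fst h
  have h2 : (1-k) * a.2 + k * b.2 = a.2 := congrArg Prod.snd h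
  by_cases hx : a.1 = b.1
  · have hy : a.2 ≠ b.2 := fun hy => hab (Prod.ext hx hy)
    have : k * (b.2 - a.2) = 0 := by linarith
    rcases mul_eq_zero.mp this with h' | h'
    · exact h'
    · exact absurd (by linarith : a.2 = b.2) hy
  · have : k * (b.1 - a.1) = 0 := by linarith
    rcases mul_eq_zero.mp this with h' | h'
    · exact h'
    · exact absurd (by linarith : a.1 = b.1) hx

lemma comb_eq_other {a b : Pl} (hab : a ≠ b) {k : ℝ} (h : (1-k) • a + k • b = b) : k = 1 := by
  have h' : (1-(1-k)) • b + (1-k) • a = b := by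
    conv_rhs => rw [← h]
    apply Prod.ext <;>
      simp only [Prod.smul_fst, Prod.smul_snd, Prod.fst_add, Prod.snd_add, smul_eq_mul] <;> ring
  have := comb_eq_self (Ne.symm hab) h'
  linarith

/-- The endpoints of a nondegenerate segment are determined. -/
lemma segment_eq_iff {a b c d : Pl} (hab : a ≠ b) (h : segment ℝ a b = segment ℝ c d) :
    (a = c ∧ b = d) ∨ (a = d ∧ b = c) := by
  obtain ⟨s, hs0, hs1, hc⟩ := seg_mem_param (h ▸ left_mem_segment ℝ c d)
  obtain ⟨t, ht0, ht1, hd⟩ := seg_mem_param (h ▸ right_mem_segment ℝ c d)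
  obtain ⟨r, hr0, hr1, ha⟩ := seg_mem_param (h.symm ▸ left_mem_segment ℝ a b)
  obtain ⟨q, hq0, hq1, hb⟩ := seg_mem_param (h.symm ▸ right_mem_segment ℝ a b)
  rw [hc, hd] at ha hb
  have hka : (1 - ((1-r)*s + r*t)) • a + ((1-r)*s + r*t) • b = a := by
    conv_rhs => rw [ha]
    apply Prod.ext <;>
      simp only [Prod.smul_fst, Prod.smul_snd, Prod.fst_add, Prod.snd_add, smul_eq_mul] <;> ring
  have hkb : (1 - ((1-q)*s + q*t)) • a + ((1-q)*s + q*t) • b = b := by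
    conv_rhs => rw [hb]
    apply Prod.ext <;>
      simp only [Prod.smul_fst, Prod.smul_snd, Prod.fst_add, Prod.snd_add, smul_eq_mul] <;> ring
  have hk0 : (1-r)*s + r*t = 0 := comb_eq_self hab hka
  have hk1 : (1-q)*s + q*t = 1 := comb_eq_other hab hkb
  have e1 : (1-r)*s = 0 := by nlinarith
  have e2 : r*t = 0 := by nlinarith
  rcases mul_eq_zero.mp e1 with h' | hs
  · -- r = 1, hence t = 0, d = a, and then s = 1, c = b
    have hr : r = 1 := by linarith
    have ht : t = 0 := by
      rcases mul_eq_zero.mp e2 with h'' | h''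
      · exact absurd h'' (by rw [hr]; norm_num)
      · exact h''
    have hda : d = a := by rw [hd, ht]; simp
    have hs' : (1-q)*s = 1 := by rw [ht] at hk1; linarith
    have hss : s = 1 := by nlinarith
    have hcb : c = b := by rw [hc, hss]; simp
    exact Or.inr ⟨hda.symm, hcb.symm⟩
  · -- s = 0 : c = a, then t = 1, d = b
    have hca : c = a := by rw [hc, hs]; simp
    have ht2 : q*t = 1 := by rw [hs] at hk1; linarith
    have htt : t = 1 := by nlinarith
    have hdb : d = b := by rw [hd, htt]; simp
    exact Or.inl ⟨hca.symm, hdb.symm⟩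

lemma collinear_of_det3_eq_zero {a b c : Pl} (hab : a ≠ b) (h : det3 a b c = 0) :
    Collinear ℝ ({a, b, c} : Set Pl) := by
  rw [collinear_iff_of_mem (Set.mem_insert a {b, c})]
  refine ⟨b - a, ?_⟩
  intro p hp
  rcases hp with rfl | rfl | rfl
  · exact ⟨0, by simp⟩
  · exact ⟨1, by apply Prod.ext <;> simp⟩
  · unfold det3 at h
    by_cases hx : b.1 - a.1 = 0
    · have hy : b.2 - a.2 ≠ 0 := by
        intro hy; exact hab (Prod.ext (by linarith) (by linarith))
      have h1 : p.1 - a.1 = 0 := by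
        have h2 : (b.2 - a.2) * (p.1 - a.1) = 0 := by
          have h3 : (b.1 - a.1) * (p.2 - a.2) = 0 := by rw [hx]; ring
          linarith
        rcases mul_eq_zero.mp h2 with h' | h'
        · exact absurd h' hy
        · exact h'
      refine ⟨(p.2 - a.2) / (b.2 - a.2), ?_⟩
      apply Prod.ext <;>
        simp only [Prod.smul_fst, Prod.smul_snd, Prod.fst_add, Prod.snd_add, smul_eq_mul,
          Prod.fst_sub, Prod.snd_sub, Prod.fst_vadd, Prod.snd_vadd, vadd_eq_add]
      · rw [hx]; simp; linarith
      · field_simp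
        ring
    · refine ⟨(p.1 - a.1) / (b.1 - a.1), ?_⟩
      apply Prod.ext <;>
        simp only [Prod.smul_fst, Prod.smul_snd, Prod.fst_add, Prod.snd_add, smul_eq_mul,
          Prod.fst_sub, Prod.snd_sub, Prod.fst_vadd, Prod.snd_vadd, vadd_eq_add]
      · field_simp
        ring
      · field_simp
        nlinarith [h]

def lt' (a b : Pl) : Prop := a.1 < b.1 ∨ (a.1 = b.1 ∧ a.2 < b.2)

lemma lt'_trichot {a b : Pl} (h : a ≠ b) : lt' a b ∨ lt' b a := by
  unfold lt'
  rcases lt_trichotomy a.1 b.1 with h1 | h1 | h1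
  · exact Or.inl (Or.inl h1)
  · rcases lt_trichotomy a.2 b.2 with h2 | h2 | h2
    · exact Or.inl (Or.inr ⟨h1, h2⟩)
    · exact absurd (Prod.ext h1 h2) h
    · exact Or.inr (Or.inr ⟨h1.symm, h2⟩)
  · exact Or.inr (Or.inl h1)

lemma lt'_asymm {a b : Pl} (h1 : lt' a b) (h2 : lt' b a) : False := by
  unfold lt' at h1 h2
  rcases h1 with h1 | ⟨h1, h1'⟩ <;> rcases h2 with h2 | ⟨h2, h2'⟩ <;> linarith

variable (P : Finset Pl) (T : Finset (Set Pl))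

def EE : Finset (Pl × Pl) := (P ×ˢ P).filter (fun e => lt' e.1 e.2 ∧ segment ℝ e.1 e.2 ∈ T)
def nbr (v : Pl) : Finset Pl := P.filter (fun w => w ≠ v ∧ segment ℝ v w ∈ T)
def dg (v : Pl) : ℕ := (nbr P T v).card

lemma mem_EE {e : Pl × Pl} (he : e ∈ EE P T) :
    e.1 ∈ P ∧ e.2 ∈ P ∧ lt' e.1 e.2 ∧ segment ℝ e.1 e.2 ∈ T := by
  simp only [EE, Finset.mem_filter, Finset.mem_product] at he
  exact ⟨he.1.1, he.1.2, he.2.1, he.2.2⟩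

lemma ne_of_lt' {a b : Pl} (h : lt' a b) : a ≠ b := by
  rintro rfl; exact lt'_asymm h h

lemma mem_nbr {v w : Pl} (hw : w ∈ P) (hvw : w ≠ v) (hT : segment ℝ v w ∈ T) :
    w ∈ nbr P T v := by
  simp only [nbr, Finset.mem_filter]; exact ⟨hw, hvw, hT⟩

lemma nbr_spec {v w : Pl} (h : w ∈ nbr P T v) :
    w ∈ P ∧ w ≠ v ∧ segment ℝ v w ∈ T := by
  simpa only [nbr, Finset.mem_filter] using h

/-- Two canonical (ordered) edges with the same endpoints are equal. -/
lemma EE_ends_eq {e f : Pl × Pl} (he : e ∈ EE P T) (hf : f ∈ EE P T)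
    (h : (e.1 = f.1 ∧ e.2 = f.2) ∨ (e.1 = f.2 ∧ e.2 = f.1)) : e = f := by
  rcases h with ⟨h1, h2⟩ | ⟨h1, h2⟩
  · exact Prod.ext h1 h2
  · exact absurd ((h1 ▸ h2 ▸ (mem_EE P T he).2.2.1 : lt' f.2 f.1))
      (fun hl => lt'_asymm hl (mem_EE P T hf).2.2.1)

lemma EE_card_eq (hseg : ∀ s ∈ T, ∃ a ∈ P, ∃ b ∈ P, a ≠ b ∧ s = segment ℝ a b) :
    (EE P T).card = T.card := by
  apply Finset.card_bij (fun e _ => segment ℝ e.1 e.2)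
  · intro e he; exact (mem_EE P T he).2.2.2
  · intro e he f hf h
    have h1 := (mem_EE P T he).2.2.1
    rcases segment_eq_iff (ne_of_lt' h1) h with h' | h'
    · exact EE_ends_eq P T he hf (Or.inl h')
    · exact EE_ends_eq P T he hf (Or.inr h')
  · intro s hs
    obtain ⟨a, ha, b, hb, hab, rfl⟩ := hseg s hs
    rcases lt'_trichot hab with h | h
    · exact ⟨(a, b), by simp only [EE, Finset.mem_filter, Finset.mem_product]; exact ⟨⟨ha, hb⟩, h, hs⟩, rfl⟩
    · refine ⟨(b, a), ?_, by rw [segment_symm]⟩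
      simp only [EE, Finset.mem_filter, Finset.mem_product]
      exact ⟨⟨hb, ha⟩, h, by rwa [segment_symm]⟩

variable {P T}

lemma det3_ne (hgp : GenPos ↑P) {a b c : Pl} (ha : a ∈ P) (hb : b ∈ P) (hc : c ∈ P)
    (hab : a ≠ b) (hac : a ≠ c) (hbc : b ≠ c) : det3 a b c ≠ 0 := fun h0 =>
  hgp a ha b hb c hc hab hac hbc (collinear_of_det3_eq_zero hab h0)

/-- Distinct unordered endpoint pairs give distinct segments. -/
lemma seg_ne {a b c d : Pl} (hab : a ≠ b) (hac : a ≠ c) (had : a ≠ d) :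
    segment ℝ a b ≠ segment ℝ c d := by
  intro h
  rcases segment_eq_iff hab h with ⟨h1, _⟩ | ⟨h1, _⟩
  · exact hac h1
  · exact had h1

/-- If `vw` is an edge and `w` has another neighbour, then all neighbours of `v`
other than `w` are strictly on one side of the line `vw`. -/
lemma extremal (hgp : GenPos ↑P)
    (hint : ∀ s ∈ T, ∀ t ∈ T, s ≠ t → ¬ Disjoint s t)
    {v w : Pl} (hv : v ∈ P) (hw : w ∈ P) (hvw : v ≠ w)
    (hT : segment ℝ v w ∈ T) (hdw : 2 ≤ dg P T w) :
    (∀ u ∈ nbr P T v, u ≠ w → 0 < det3 v w u) ∨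
    (∀ u ∈ nbr P T v, u ≠ w → det3 v w u < 0) := by
  have hvnw : v ∈ nbr P T w := mem_nbr P T hv hvw (by rwa [segment_symm])
  obtain ⟨x, hx, hxv⟩ := Finset.exists_mem_ne (by unfold dg at hdw; omega : 1 < (nbr P T w).card) v
  obtain ⟨hxP, hxw, hxT⟩ := nbr_spec P T hx
  have hdx : det3 v w x ≠ 0 := det3_ne hgp hv hw hxP hvw (Ne.symm hxv) (Ne.symm hxw)
  -- every other neighbour u of v has det3 v w u of the same sign as det3 v w x
  have key : ∀ u ∈ nbr P T v, u ≠ w → 0 < det3 v w u * det3 v w x := by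
    intro u hu huw
    obtain ⟨huP, huv, huT⟩ := nbr_spec P T hu
    have hdu : det3 v w u ≠ 0 := det3_ne hgp hv hw huP hvw (Ne.symm huv) (Ne.symm huw)
    rcases lt_or_gt_of_ne (mul_ne_zero hdu hdx) with hneg | hpos
    · exfalso
      have hdisj := disjoint_of_opposite_sides hvw hneg
      have hne : segment ℝ v u ≠ segment ℝ w x :=
        seg_ne (Ne.symm huv) hvw (Ne.symm hxv)
      exact hint _ huT _ hxT hne hdisj
    · exact hpos
  rcases lt_or_gt_of_ne hdx with hneg | hpos
  · right; intro u hu huw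
    have := key u hu huw
    nlinarith
  · left; intro u hu huw
    have := key u hu huw
    nlinarith

def oth (v : Pl) (e : Pl × Pl) : Pl := if e.1 = v then e.2 else e.1

lemma oth_spec {v : Pl} {e : Pl × Pl} (he : e ∈ EE P T) (hi : e.1 = v ∨ e.2 = v) :
    oth v e ∈ nbr P T v ∧ (e = (v, oth v e) ∨ e = (oth v e, v)) := by
  obtain ⟨h1, h2, hlt, hT⟩ := mem_EE P T he
  have hne := ne_of_lt' hlt
  unfold oth
  by_cases h : e.1 = v
  · simp only [if_pos h]
    subst h
    exact ⟨mem_nbr P T h2 (Ne.symm hne) hT, Or.inl rfl⟩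
  · have h' : e.2 = v := by tauto
    simp only [if_neg h]
    subst h'
    exact ⟨mem_nbr P T h1 hne (by rwa [segment_symm]), Or.inr rfl⟩

lemma oth_inj {v : Pl} {e f : Pl × Pl} (he : e ∈ EE P T) (hf : f ∈ EE P T)
    (hie : e.1 = v ∨ e.2 = v) (hif : f.1 = v ∨ f.2 = v)
    (h : oth v e = oth v f) : e = f := by
  obtain ⟨_, he'⟩ := oth_spec he hie
  obtain ⟨_, hf'⟩ := oth_spec hf hif
  apply EE_ends_eq P T he hf
  rcases he' with h1 | h1 <;> rcases hf' with h2 | h2 <;>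
    rw [h1, h2] <;> simp [h] <;> tauto

/-- "Left-extremal": all other neighbours of `v` are strictly left of `v w`. -/
def PosE (P : Finset Pl) (T : Finset (Set Pl)) (v w : Pl) : Prop :=
  ∀ u ∈ nbr P T v, u ≠ w → 0 < det3 v w u
def NegE (P : Finset Pl) (T : Finset (Set Pl)) (v w : Pl) : Prop :=
  ∀ u ∈ nbr P T v, u ≠ w → det3 v w u < 0

lemma not_pos_pos {v w1 w2 : Pl} (h1 : w1 ∈ nbr P T v) (h2 : w2 ∈ nbr P T v)
    (hne : w1 ≠ w2) (hp1 : PosE P T v w1) (hp2 : PosE P T v w2) : False := by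
  have a1 := hp1 w2 h2 (Ne.symm hne)
  have a2 := hp2 w1 h1 hne
  rw [show det3 v w1 w2 = - det3 v w2 w1 by rw [← det3_swap23]] at a1
  linarith

lemma not_neg_neg {v w1 w2 : Pl} (h1 : w1 ∈ nbr P T v) (h2 : w2 ∈ nbr P T v)
    (hne : w1 ≠ w2) (hp1 : NegE P T v w1) (hp2 : NegE P T v w2) : False := by
  have a1 := hp1 w2 h2 (Ne.symm hne)
  have a2 := hp2 w1 h1 hne
  rw [show det3 v w1 w2 = - det3 v w2 w1 by rw [← det3_swap23]] at a1
  linarith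

def E2 (P : Finset Pl) (T : Finset (Set Pl)) : Finset (Pl × Pl) :=
  (EE P T).filter (fun e => 2 ≤ dg P T e.1 ∧ 2 ≤ dg P T e.2)

lemma incid_le_two (hgp : GenPos ↑P)
    (hint : ∀ s ∈ T, ∀ t ∈ T, s ≠ t → ¬ Disjoint s t) (v : Pl) :
    ((E2 P T).filter (fun e => e.1 = v ∨ e.2 = v)).card ≤ 2 := by
  by_contra hcon
  push_neg at hcon
  obtain ⟨e1, e2, e3, he1, he2, he3, h12, h13, h23⟩ := Finset.two_lt_card_iff.mp hcon
  have spec : ∀ e ∈ (E2 P T).filter (fun e => e.1 = v ∨ e.2 = v),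
      e ∈ EE P T ∧ (e.1 = v ∨ e.2 = v) ∧
      oth v e ∈ nbr P T v ∧ 2 ≤ dg P T (oth v e) ∧
      (PosE P T v (oth v e) ∨ NegE P T v (oth v e)) := by
    intro e he
    simp only [E2, Finset.mem_filter, and_assoc] at he
    obtain ⟨heE, hd1, hd2, hiv⟩ := he
    obtain ⟨hw, _⟩ := oth_spec heE hiv
    obtain ⟨hwP, hwv, hwT⟩ := nbr_spec P T hw
    have hvP : v ∈ P := by
      rcases hiv with h | h
      · exact h ▸ (mem_EE P T heE).1
      · exact h ▸ (mem_EE P T heE).2.1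
    have hdw : 2 ≤ dg P T (oth v e) := by
      unfold oth at *
      by_cases h : e.1 = v
      · simp only [if_pos h] at *; exact hd2
      · simp only [if_neg h] at *; exact hd1
    exact ⟨heE, hiv, hw, hdw, extremal hgp hint hvP hwP (Ne.symm hwv) hwT hdw⟩
  obtain ⟨hE1, hi1, hw1, hd1, hx1⟩ := spec e1 he1
  obtain ⟨hE2, hi2, hw2, hd2, hx2⟩ := spec e2 he2
  obtain ⟨hE3, hi3, hw3, hd3, hx3⟩ := spec e3 he3
  have n12 : oth v e1 ≠ oth v e2 := fun h => h12 (oth_inj hE1 hE2 hi1 hi2 h)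
  have n13 : oth v e1 ≠ oth v e3 := fun h => h13 (oth_inj hE1 hE3 hi1 hi3 h)
  have n23 : oth v e2 ≠ oth v e3 := fun h => h23 (oth_inj hE2 hE3 hi2 hi3 h)
  rcases hx1 with hp1 | hp1 <;> rcases hx2 with hp2 | hp2 <;> rcases hx3 with hp3 | hp3 <;>
    first
      | exact not_pos_pos hw1 hw2 n12 hp1 hp2
      | exact not_pos_pos hw1 hw3 n13 hp1 hp3
      | exact not_pos_pos hw2 hw3 n23 hp2 hp3
      | exact not_neg_neg hw1 hw2 n12 hp1 hp2
      | exact not_neg_neg hw1 hw3 n13 hp1 hp3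
      | exact not_neg_neg hw2 hw3 n23 hp2 hp3

lemma dg_pos_left {e : Pl × Pl} (he : e ∈ EE P T) : 1 ≤ dg P T e.1 := by
  obtain ⟨h1, h2, hlt, hT⟩ := mem_EE P T he
  have : e.2 ∈ nbr P T e.1 := mem_nbr P T h2 (Ne.symm (ne_of_lt' hlt)) hT
  exact Finset.card_pos.mpr ⟨e.2, this⟩

lemma dg_pos_right {e : Pl × Pl} (he : e ∈ EE P T) : 1 ≤ dg P T e.2 := by
  obtain ⟨h1, h2, hlt, hT⟩ := mem_EE P T he
  have : e.1 ∈ nbr P T e.2 := mem_nbr P T h1 (ne_of_lt' hlt) (by rwa [segment_symm])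
  exact Finset.card_pos.mpr ⟨e.1, this⟩

theorem thrackle_bound (hgp : GenPos ↑P)
    (hseg : ∀ s ∈ T, ∃ a ∈ P, ∃ b ∈ P, a ≠ b ∧ s = segment ℝ a b)
    (hint : ∀ s ∈ T, ∀ t ∈ T, s ≠ t → ¬ Disjoint s t) :
    T.card ≤ P.card := by
  classical
  set V1 := P.filter (fun v => dg P T v = 1) with hV1
  set V2 := P.filter (fun v => 2 ≤ dg P T v) with hV2
  set E1' := (EE P T).filter (fun e => ¬(2 ≤ dg P T e.1 ∧ 2 ≤ dg P T e.2)) with hE1'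
  -- (a) |E1'| ≤ |V1|
  have ha : E1'.card ≤ V1.card := by
    apply Finset.card_le_card_of_injOn (fun e => if dg P T e.1 = 1 then e.1 else e.2)
    · intro e he
      simp only [Finset.mem_coe, hE1', Finset.mem_filter] at he
      obtain ⟨heE, hnd⟩ := he
      have l1 := dg_pos_left heE
      have l2 := dg_pos_right heE
      obtain ⟨h1, h2, hlt, hT⟩ := mem_EE P T heE
      by_cases h : dg P T e.1 = 1
      · simp only [if_pos h, hV1, Finset.mem_coe, Finset.mem_filter]; exact ⟨h1, h⟩
      · simp only [if_neg h, hV1, Finset.mem_coe, Finset.mem_filter]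
        refine ⟨h2, ?_⟩
        omega
    · intro e he f hf hef
      simp only [Finset.mem_coe, hE1', Finset.mem_filter] at he hf
      obtain ⟨heE, hed⟩ := he
      obtain ⟨hfE, hfd⟩ := hf
      simp only at hef
      set u := if dg P T e.1 = 1 then e.1 else e.2 with hu
      have hfu : (if dg P T f.1 = 1 then f.1 else f.2) = u := hef.symm
      have hie : e.1 = u ∨ e.2 = u := by
        by_cases h : dg P T e.1 = 1 <;> simp [hu, h]
      have hif : f.1 = u ∨ f.2 = u := by
        by_cases h : dg P T f.1 = 1
        · left; rw [← hfu, if_pos h]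
        · right; rw [← hfu, if_neg h]
      have hdu : dg P T u = 1 := by
        by_cases h : dg P T e.1 = 1
        · simpa [hu, h] using h
        · have l1 := dg_pos_left heE
          have l2 := dg_pos_right heE
          simp only [hu, if_neg h]
          omega
      obtain ⟨hwe, _⟩ := oth_spec heE hie
      obtain ⟨hwf, _⟩ := oth_spec hfE hif
      obtain ⟨a, hab⟩ := Finset.card_eq_one.mp hdu
      rw [hab, Finset.mem_singleton] at hwe hwf
      exact oth_inj heE hfE hie hif (hwe.trans hwf.symm)
  -- (b) |E2| ≤ |V2|
  have hb : (E2 P T).card ≤ V2.card := by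
    have hsum : ∑ v ∈ V2, ((E2 P T).filter (fun e => e.1 = v ∨ e.2 = v)).card
        = 2 * (E2 P T).card := by
      have h1 : ∀ v ∈ V2, ((E2 P T).filter (fun e => e.1 = v ∨ e.2 = v)).card
          = ∑ e ∈ E2 P T, if e.1 = v ∨ e.2 = v then 1 else 0 := by
        intro v _; rw [Finset.card_filter]
      rw [Finset.sum_congr rfl h1, Finset.sum_comm]
      have h2 : ∀ e ∈ E2 P T, (∑ v ∈ V2, if e.1 = v ∨ e.2 = v then 1 else 0) = 2 := by
        intro e he
        simp only [E2, Finset.mem_filter] at he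
        obtain ⟨heE, hd1, hd2⟩ := he
        have h1P := (mem_EE P T heE).1
        have h2P := (mem_EE P T heE).2.1
        have hne := ne_of_lt' (mem_EE P T heE).2.2.1
        rw [← Finset.card_filter]
        have : V2.filter (fun v => e.1 = v ∨ e.2 = v) = {e.1, e.2} := by
          ext v
          simp only [Finset.mem_filter, Finset.mem_insert, Finset.mem_singleton, hV2]
          constructor
          · rintro ⟨_, h | h⟩
            · exact Or.inl h.symm
            · exact Or.inr h.symm
          · rintro (rfl | rfl)
            · exact ⟨⟨h1P, hd1⟩, Or.inl rfl⟩
            · exact ⟨⟨h2P, hd2⟩, Or.inr rfl⟩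
        rw [this, Finset.card_insert_of_notMem (by simpa using hne), Finset.card_singleton]
      rw [Finset.sum_congr rfl h2, Finset.sum_const, smul_eq_mul, mul_comm]
    have hle : ∑ v ∈ V2, ((E2 P T).filter (fun e => e.1 = v ∨ e.2 = v)).card
        ≤ 2 * V2.card := by
      calc ∑ v ∈ V2, ((E2 P T).filter (fun e => e.1 = v ∨ e.2 = v)).card
          ≤ ∑ _v ∈ V2, 2 := Finset.sum_le_sum (fun v _ => incid_le_two hgp hint v)
        _ = 2 * V2.card := by rw [Finset.sum_const, smul_eq_mul, mul_comm]
    omega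
  -- (c) |EE| = |E2| + |E1'|
  have hc : (E2 P T).card + E1'.card = (EE P T).card := by
    exact Finset.card_filter_add_card_filter_not _
  -- (d) |V1| + |V2| ≤ |P|
  have hd : V1.card + V2.card ≤ P.card := by
    rw [← Finset.card_union_of_disjoint]
    · exact Finset.card_le_card (Finset.union_subset (Finset.filter_subset _ _)
        (Finset.filter_subset _ _))
    · rw [Finset.disjoint_left]
      intro v hv hv'
      simp only [hV1, hV2, Finset.mem_filter] at hv hv'
      omega
  have := EE_card_eq P T hseg
  omega

end

/-- the independence number of `D(P)` is `n - 1` or `n`. -/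
theorem stmt_3 (P : Finset Pl) (hn : 3 ≤ P.card) (hgp : GenPos ↑P) :
    ∃ m : ℕ, (m = P.card - 1 ∨ m = P.card) ∧
      IsGreatest {k : ℕ | ∃ S : Set ↥(Segs (↑P : Set Pl)),
        IsIndepSet (DisjGraph ↑P) S ∧ S.ncard = k} m := by
  classical
  -- Segs is finite
  have hSegsFin : (Segs (↑P : Set Pl)).Finite := by
    apply Set.Finite.subset ((P ×ˢ P).finite_toSet.image (fun e => segment ℝ e.1 e.2))
    rintro s ⟨a, ha, b, hb, hab, rfl⟩
    exact ⟨(a, b), by simpa using ⟨ha, hb⟩, rfl⟩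
  have : Finite ↥(Segs (↑P : Set Pl)) := hSegsFin.to_subtype
  set K := {k : ℕ | ∃ S : Set ↥(Segs (↑P : Set Pl)),
      IsIndepSet (DisjGraph ↑P) S ∧ S.ncard = k} with hK
  -- upper bound
  have hub : ∀ k ∈ K, k ≤ P.card := by
    rintro k ⟨S, hS, rfl⟩
    have hSfin : S.Finite := Set.toFinite S
    set T0 : Set (Set Pl) := Subtype.val '' S with hT0
    have hT0fin : T0.Finite := hSfin.image _
    have hcard : S.ncard = hT0fin.toFinset.card := by
      rw [← Set.ncard_eq_toFinset_card T0 hT0fin]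
      exact (Set.ncard_image_of_injective S Subtype.val_injective).symm
    rw [hcard]
    apply thrackle_bound hgp
    · intro s hs
      rw [Set.Finite.mem_toFinset] at hs
      obtain ⟨⟨s', hs'⟩, _, rfl⟩ := hs
      obtain ⟨a, ha, b, hb, hab, rfl⟩ := hs'
      exact ⟨a, ha, b, hb, hab, rfl⟩
    · intro s hs t ht hst
      rw [Set.Finite.mem_toFinset] at hs ht
      obtain ⟨x, hx, rfl⟩ := hs
      obtain ⟨y, hy, rfl⟩ := ht
      have hxy : x ≠ y := fun h => hst (congrArg _ h)
      exact hS hx hy hxy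
  -- the star: lower bound witness
  obtain ⟨p, hp⟩ := Finset.card_pos.mp (show 0 < P.card by omega)
  obtain ⟨q0, hq0, hq0p⟩ := Finset.exists_mem_ne (show 1 < P.card by omega) p
  have hmem : ∀ q : Pl, q ∈ P → q ≠ p → segment ℝ p q ∈ Segs (↑P : Set Pl) :=
    fun q hq hqp => ⟨p, hp, q, hq, Ne.symm hqp, rfl⟩
  set f : Pl → ↥(Segs (↑P : Set Pl)) := fun q =>
    if h : q ∈ P ∧ q ≠ p then ⟨segment ℝ p q, hmem q h.1 h.2⟩
    else ⟨segment ℝ p q0, hmem q0 hq0 hq0p⟩ with hf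
  have hfval : ∀ q : Pl, q ∈ P → q ≠ p → (↑(f q) : Set Pl) = segment ℝ p q := by
    intro q hq hqp; simp [hf, dif_pos (⟨hq, hqp⟩ : q ∈ P ∧ q ≠ p)]
  set A : Set Pl := {q | q ∈ P ∧ q ≠ p} with hA
  have hstar : P.card - 1 ∈ K := by
    refine ⟨f '' A, ?_, ?_⟩
    · rintro x ⟨q1, hq1, rfl⟩ y ⟨q2, hq2, rfl⟩ hne hadj
      have h1 := hfval q1 hq1.1 hq1.2
      have h2 := hfval q2 hq2.1 hq2.2
      have : Disjoint (↑(f q1) : Set Pl) (↑(f q2) : Set Pl) := hadj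
      rw [h1, h2] at this
      exact Set.not_disjoint_iff.2
        ⟨p, left_mem_segment ℝ p q1, left_mem_segment ℝ p q2⟩ this
    · have hinj : Set.InjOn f A := by
        rintro q1 ⟨hq1, hq1p⟩ q2 ⟨hq2, hq2p⟩ h
        have h1 := hfval q1 hq1 hq1p
        have h2 := hfval q2 hq2 hq2p
        have hseq : segment ℝ p q1 = segment ℝ p q2 := by rw [← h1, ← h2, h]
        rcases segment_eq_iff (Ne.symm hq1p) hseq with ⟨_, h'⟩ | ⟨h', _⟩
        · exact h'
        · exact absurd h'.symm hq2p
      rw [Set.ncard_image_of_injOn hinj]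
      have : A = ↑(P.erase p) := by
        ext q; simp [hA, Finset.mem_erase, and_comm]
      rw [this, Set.ncard_coe_finset, Finset.card_erase_of_mem hp]
  -- conclude
  have hKne : K.Nonempty := ⟨_, hstar⟩
  have hKbdd : BddAbove K := ⟨P.card, fun k hk => hub k hk⟩
  refine ⟨sSup K, ?_, ?_, fun k hk => le_csSup hKbdd hk⟩
  · have h1 : P.card - 1 ≤ sSup K := le_csSup hKbdd hstar
    have h2 : sSup K ≤ P.card := hub _ (Nat.sSup_mem hKne hKbdd)
    omega
  · exact Nat.sSup_mem hKne hKbdd
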